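/- Let z, g ∈ ℂ with |z| < 1, and let r ≥ 0 be real with r·|g| < 1. Then the hyperbolic distance traveled by the stepped point is d_𝔻(z, (−r·g + z)/(−r·g·conj(z) + 1)) = ln((1 + r·|g|)/(1 − r·|g|)). -/

import Mathlib

/-- Inverse hyperbolic tangent: `artanh x = (1/2)·ln((1 + x)/(1 − x))`. -/
noncomputable def artanh (x : ℝ) : ℝ := (1 / 2) * Real.log ((1 + x) / (1 - x))

/-- Hyperbolic distance in the Poincaré disk:
`d_𝔻(z, w) = 2·artanh(|z − w| / |1 − z·conj(w)|)`. -/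
noncomputable def hypDist (z w : ℂ) : ℝ :=
  2 * artanh (‖z - w‖ / ‖1 - z * (starRingEnd ℂ) w‖)

/-- The hyperbolic distance traveled by a descent step with step-size parameter `r`
is `d_𝔻(z, z′) = ln((1 + r·|g|)/(1 − r·|g|))`. -/
theorem descent_step_distance (z g : ℂ) (hz : ‖z‖ < 1)
    (r : ℝ) (hr0 : 0 ≤ r) (hrg : r * ‖g‖ < 1) :
    hypDist z ((-(r : ℂ) * g + z) / (-(r : ℂ) * g * (starRingEnd ℂ) z + 1)) =
      Real.log ((1 + r * ‖g‖) / (1 - r * ‖g‖)) := by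
  have habs : ‖-(r:ℂ) * g * (starRingEnd ℂ) z‖ < 1 := by
    rw [norm_mul, norm_mul]
    simp only [norm_neg, Complex.norm_real, Real.norm_eq_abs, abs_of_nonneg hr0, Complex.norm_conj]
    calc r * ‖g‖ * ‖z‖ ≤ r * ‖g‖ * 1 :=
          mul_le_mul_of_nonneg_left hz.le (by positivity)
      _ < 1 := by simpa using hrg
  have hD : -(r:ℂ) * g * (starRingEnd ℂ) z + 1 ≠ 0 := by
    intro h
    have h1 : -(r:ℂ) * g * (starRingEnd ℂ) z = -1 := by linear_combination h
    rw [h1] at habs; simp at habs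
  set D := -(r:ℂ) * g * (starRingEnd ℂ) z + 1 with hDdef
  have hDc : (starRingEnd ℂ) D ≠ 0 := by
    simpa using hD
  have hD' : (1:ℂ) - (r:ℂ)*g*(starRingEnd ℂ) z ≠ 0 := by
    intro h; apply hD; rw [hDdef]; linear_combination h
  have hDc' : (1:ℂ) - (r:ℂ)*(starRingEnd ℂ) g*z ≠ 0 := by
    intro h; apply hDc
    rw [hDdef, map_add, map_mul, map_mul, map_neg]
    simp only [Complex.conj_conj, Complex.conj_ofReal, map_one]
    linear_combination h
  have hrwD : D = 1 - (r:ℂ)*g*(starRingEnd ℂ) z := by rw [hDdef]; ring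
  have hrwDc : (starRingEnd ℂ) D = 1 - (r:ℂ)*(starRingEnd ℂ) g*z := by
    rw [hDdef, map_add, map_mul, map_mul, map_neg]
    simp only [Complex.conj_conj, Complex.conj_ofReal, map_one]
    ring
  have h1 : z - (-(r:ℂ)*g+z)/D = ((r:ℂ)*g*(1 - z*(starRingEnd ℂ) z))/D := by
    rw [hrwD]; field_simp; ring
  have h2 : 1 - z * (starRingEnd ℂ) ((-(r:ℂ)*g+z)/D) =
      (1 - z*(starRingEnd ℂ) z)/((starRingEnd ℂ) D) := by
    rw [map_div₀, hrwDc]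
    simp only [map_add, map_mul, map_neg, Complex.conj_conj, Complex.conj_ofReal]
    rw [eq_div_iff hDc', sub_mul, mul_div_assoc', div_mul_cancel₀ _ hDc']
    ring
  have hs : z * (starRingEnd ℂ) z = ((Complex.normSq z : ℝ) : ℂ) := Complex.mul_conj z
  have hns : Complex.normSq z < 1 := by
    rw [← Complex.sq_norm]; nlinarith [norm_nonneg z]
  have habs1 : ‖1 - z * (starRingEnd ℂ) z‖ = 1 - Complex.normSq z := by
    rw [hs]
    rw [show (1 : ℂ) - ((Complex.normSq z : ℝ) : ℂ) = (((1 - Complex.normSq z : ℝ)) : ℂ) by push_cast; ring]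
    rw [Complex.norm_real, Real.norm_eq_abs, abs_of_nonneg (by linarith)]
  have hratio : ‖z - (-(r:ℂ)*g+z)/D‖ /
      ‖1 - z * (starRingEnd ℂ) ((-(r:ℂ)*g+z)/D)‖ = r * ‖g‖ := by
    rw [h1, h2, norm_div, norm_div, norm_mul, norm_mul, habs1, Complex.norm_conj,
      Complex.norm_real, Real.norm_eq_abs, abs_of_nonneg hr0]
    have hDne : ‖D‖ ≠ 0 := by simpa using hD
    have : (1 : ℝ) - Complex.normSq z ≠ 0 := by linarith
    field_simp
  rw [hypDist, hratio, artanh]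
  ring
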